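/- Let δ > 0 and define f : ℂ² → ℂ² by f(z, w) = (z, w + (z/δ)²). Then for every (u, v) ∈ ℂ² the circle C = {(u + δ e^{iθ}, v) : θ ∈ [−π, π]} is not contained in f(Δ²). Consequently, f(Δ²) contains no closed Euclidean ball of radius δ. -/

import Mathlib

open Real

/-- **Duren–Rudin counterexample.** For `f(z,w) = (z, w + (z/δ)²)`, no circle
`{(u + δ e^{iθ}, v)}` is contained in `f(Δ²)`; consequently `f(Δ²)` contains no closed
Euclidean ball of radius `δ`. -/
theorem duren_rudin_counterexample (δ : ℝ) (hδ : 0 < δ) :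
    (∀ u v : ℂ, ¬ ∀ θ ∈ Set.Icc (-π) π,
      (u + (δ : ℂ) * Complex.exp (θ * Complex.I), v) ∈
        (fun x : ℂ × ℂ => (x.1, x.2 + (x.1 / (δ : ℂ)) ^ 2)) ''
          {x : ℂ × ℂ | ‖x.1‖ < 1 ∧ ‖x.2‖ < 1}) ∧
    (∀ u v : ℂ,
      ¬ ({p : ℂ × ℂ | ‖p.1 - u‖ ^ 2 + ‖p.2 - v‖ ^ 2 ≤ δ ^ 2} ⊆
        (fun x : ℂ × ℂ => (x.1, x.2 + (x.1 / (δ : ℂ)) ^ 2)) ''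
          {x : ℂ × ℂ | ‖x.1‖ < 1 ∧ ‖x.2‖ < 1})) := by
  have hpi := Real.pi_pos
  have main : ∀ u v : ℂ, ¬ ∀ θ ∈ Set.Icc (-π) π,
      (u + (δ : ℂ) * Complex.exp (θ * Complex.I), v) ∈
        (fun x : ℂ × ℂ => (x.1, x.2 + (x.1 / (δ : ℂ)) ^ 2)) ''
          {x : ℂ × ℂ | ‖x.1‖ < 1 ∧ ‖x.2‖ < 1} := by
    intro u v h
    have key : ∀ θ ∈ Set.Icc (-π) π,
        ‖v - ((u + (δ : ℂ) * Complex.exp (θ * Complex.I)) / δ) ^ 2‖ < 1 := by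
      intro θ hθ
      obtain ⟨x, ⟨hx1, hx2⟩, hx⟩ := h θ hθ
      have h1 : x.1 = u + (δ : ℂ) * Complex.exp (θ * Complex.I) := congrArg Prod.fst hx
      have h2 : x.2 + (x.1 / (δ : ℂ)) ^ 2 = v := congrArg Prod.snd hx
      have : x.2 = v - ((u + (δ : ℂ) * Complex.exp (θ * Complex.I)) / δ) ^ 2 := by
        rw [← h1, ← h2]; ring
      rwa [this] at hx2
    have m0 : (0:ℝ) ∈ Set.Icc (-π) π := ⟨by linarith, by linarith⟩
    have mpi : π ∈ Set.Icc (-π) π := ⟨by linarith, le_refl _⟩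
    have mh : π/2 ∈ Set.Icc (-π) π := ⟨by linarith, by linarith⟩
    have mnh : -(π/2) ∈ Set.Icc (-π) π := ⟨by linarith, by linarith⟩
    have e0 : Complex.exp ((0:ℝ) * Complex.I) = 1 := by simp
    have epi : Complex.exp ((π:ℝ) * Complex.I) = -1 := Complex.exp_pi_mul_I
    have eh : Complex.exp ((π/2:ℝ) * Complex.I) = Complex.I := by
      rw [Complex.exp_mul_I]; push_cast; simp
    have enh : Complex.exp ((-(π/2):ℝ) * Complex.I) = -Complex.I := by
      rw [Complex.exp_mul_I]; push_cast; simp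
    have k0 := key 0 m0
    have kpi := key π mpi
    have kh := key (π/2) mh
    have knh := key (-(π/2)) mnh
    rw [e0] at k0
    rw [epi] at kpi
    rw [eh] at kh
    rw [enh] at knh
    set w1 := v - ((u + (δ:ℂ) * 1) / δ) ^ 2 with hw1
    set w2 := v - ((u + (δ:ℂ) * (-1)) / δ) ^ 2 with hw2
    set w3 := v - ((u + (δ:ℂ) * Complex.I) / δ) ^ 2 with hw3
    set w4 := v - ((u + (δ:ℂ) * (-Complex.I)) / δ) ^ 2 with hw4
    have hδ' : (δ:ℂ) ≠ 0 := by exact_mod_cast hδ.ne'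
    have hs : ∀ c : ℂ, (u + (δ:ℂ) * c) / δ = u/δ + c := fun c => by field_simp
    have E : w1 + w2 - w3 - w4 = -4 := by
      rw [hw1, hw2, hw3, hw4, hs, hs, hs, hs]
      linear_combination (2:ℂ) * Complex.I_sq
    have habs : ‖w1 + w2 - w3 - w4‖ = 4 := by
      rw [E]; simp
    have t1 : ‖w1 + w2 - w3 - w4‖ ≤
        ‖w1‖ + ‖w2‖ + ‖w3‖ + ‖w4‖ := by
      calc ‖w1 + w2 - w3 - w4‖
          ≤ ‖w1 + w2 - w3‖ + ‖w4‖ := by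
            simpa [← sub_eq_add_neg] using norm_add_le (w1 + w2 - w3) (-w4)
        _ ≤ ‖w1 + w2‖ + ‖w3‖ + ‖w4‖ := by
            have := norm_add_le (w1 + w2) (-w3)
            simp only [← sub_eq_add_neg, norm_neg] at this
            linarith
        _ ≤ ‖w1‖ + ‖w2‖ + ‖w3‖ + ‖w4‖ := by
            have := norm_add_le w1 w2
            linarith
    rw [habs] at t1
    linarith
  refine ⟨main, fun u v hsub => main u v fun θ hθ => hsub ?_⟩
  show ‖u + (δ : ℂ) * Complex.exp (θ * Complex.I) - u‖ ^ 2 +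
      ‖v - v‖ ^ 2 ≤ δ ^ 2
  have : u + (δ : ℂ) * Complex.exp (θ * Complex.I) - u = (δ : ℂ) * Complex.exp (θ * Complex.I) := by
    ring
  rw [this]
  simp [norm_mul, Complex.norm_exp_ofReal_mul_I, Complex.norm_real, abs_of_pos hδ]
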